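/- arXiv:2505.03744 — 4 statements merged into one kernel-verified Lean document; each statement's English description precedes it below -/
import Mathlib

section
/- Let p₀, p₁, p₂, p₃ be four points in ℝ³ whose pairwise distances all equal s > 0. Then the volume (Lebesgue measure) of their convex hull equals √2·s³/12. -/
open MeasureTheory Pointwise Matrix

lemma sliceZ (a b : ℝ) : {z : ℝ | 0 ≤ z ∧ a + z ≤ b} = Set.Icc 0 (b - a) := by
  ext z; simp [Set.mem_Icc]; intro _; constructor <;> intro <;> linarith

lemma vol2 (c : ℝ) (hc : 0 ≤ c) :
    volume {q : ℝ × ℝ | 0 ≤ q.1 ∧ 0 ≤ q.2 ∧ q.1 + q.2 ≤ c} = ENNReal.ofReal (c ^ 2 / 2) := by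
  have hmeas : MeasurableSet {q : ℝ × ℝ | 0 ≤ q.1 ∧ 0 ≤ q.2 ∧ q.1 + q.2 ≤ c} := by
    apply MeasurableSet.inter
    · exact measurableSet_le measurable_const measurable_fst
    apply MeasurableSet.inter
    · exact measurableSet_le measurable_const measurable_snd
    · exact measurableSet_le (measurable_fst.add measurable_snd) measurable_const
  rw [show (volume : Measure (ℝ × ℝ)) = (volume : Measure ℝ).prod volume from rfl,
    Measure.prod_apply hmeas]
  have hslice : ∀ y : ℝ, (Prod.mk y ⁻¹' {q : ℝ × ℝ | 0 ≤ q.1 ∧ 0 ≤ q.2 ∧ q.1 + q.2 ≤ c})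
      = if 0 ≤ y then Set.Icc 0 (c - y) else ∅ := by
    intro y
    by_cases hy : 0 ≤ y <;> simp [hy, Set.ext_iff] <;> intro z
    · intro _; constructor <;> intro <;> linarith
  simp only [hslice]
  have : (fun y : ℝ => volume (if 0 ≤ y then Set.Icc 0 (c - y) else ∅))
      = Set.indicator (Set.Icc 0 c) (fun y => ENNReal.ofReal (c - y)) := by
    funext y
    by_cases hy : 0 ≤ y
    · by_cases hyc : y ≤ c
      · simp [hy, Set.indicator_of_mem, Set.mem_Icc.mpr ⟨hy, hyc⟩, Real.volume_Icc]
      · simp [hy, Set.indicator_of_notMem, Set.mem_Icc, hyc, Real.volume_Icc,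
          ENNReal.ofReal_eq_zero.mpr (by linarith : c - y - 0 ≤ 0)]
    · simp [hy, Set.indicator_of_notMem, Set.mem_Icc, hy]
  rw [this]
  show (∫⁻ y, (Set.Icc 0 c).indicator (fun y => ENNReal.ofReal (c - y)) y) = _
  rw [lintegral_indicator measurableSet_Icc]
  rw [← ofReal_integral_eq_lintegral_ofReal]
  · congr 1
    rw [MeasureTheory.integral_Icc_eq_integral_Ioc, ← intervalIntegral.integral_of_le hc]
    have : ∫ y in (0:ℝ)..c, (c - y) = c ^ 2 / 2 := by
      rw [intervalIntegral.integral_sub intervalIntegrable_const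
        (intervalIntegral.intervalIntegrable_id)]
      simp; ring
    rw [this]
  · exact (continuous_const.sub continuous_id).integrableOn_Icc
  · filter_upwards [ae_restrict_mem measurableSet_Icc] with y hy
    simp only [Set.mem_Icc] at hy
    simp only [Pi.zero_apply]
    linarith [hy.2]

lemma vol3 : volume {q : ℝ × ℝ × ℝ | 0 ≤ q.1 ∧ 0 ≤ q.2.1 ∧ 0 ≤ q.2.2 ∧ q.1 + q.2.1 + q.2.2 ≤ 1}
    = ENNReal.ofReal (1 / 6) := by
  have hmeas : MeasurableSet {q : ℝ × ℝ × ℝ | 0 ≤ q.1 ∧ 0 ≤ q.2.1 ∧ 0 ≤ q.2.2 ∧ q.1 + q.2.1 + q.2.2 ≤ 1} := by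
    apply MeasurableSet.inter
    · exact measurableSet_le measurable_const measurable_fst
    apply MeasurableSet.inter
    · exact measurableSet_le measurable_const (measurable_fst.comp measurable_snd)
    apply MeasurableSet.inter
    · exact measurableSet_le measurable_const (measurable_snd.comp measurable_snd)
    · exact measurableSet_le
        ((measurable_fst.add (measurable_fst.comp measurable_snd)).add
          (measurable_snd.comp measurable_snd)) measurable_const
  rw [show (volume : Measure (ℝ × ℝ × ℝ)) = (volume : Measure ℝ).prod volume from rfl,
    Measure.prod_apply hmeas]
  have hslice : ∀ x : ℝ,
      volume (Prod.mk x ⁻¹' {q : ℝ × ℝ × ℝ | 0 ≤ q.1 ∧ 0 ≤ q.2.1 ∧ 0 ≤ q.2.2 ∧ q.1 + q.2.1 + q.2.2 ≤ 1})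
      = Set.indicator (Set.Icc 0 1) (fun x => ENNReal.ofReal ((1 - x) ^ 2 / 2)) x := by
    intro x
    by_cases hx : 0 ≤ x
    · by_cases hx1 : x ≤ 1
      · rw [Set.indicator_of_mem (Set.mem_Icc.mpr ⟨hx, hx1⟩)]
        have : (Prod.mk x ⁻¹' {q : ℝ × ℝ × ℝ | 0 ≤ q.1 ∧ 0 ≤ q.2.1 ∧ 0 ≤ q.2.2 ∧ q.1 + q.2.1 + q.2.2 ≤ 1})
            = {q : ℝ × ℝ | 0 ≤ q.1 ∧ 0 ≤ q.2 ∧ q.1 + q.2 ≤ 1 - x} := by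
          ext q; simp only [Set.mem_preimage, Set.mem_setOf_eq]
          constructor
          · rintro ⟨_, h1, h2, h3⟩; exact ⟨h1, h2, by linarith⟩
          · rintro ⟨h1, h2, h3⟩; exact ⟨hx, h1, h2, by linarith⟩
        rw [this, vol2 (1 - x) (by linarith)]
      · rw [Set.indicator_of_notMem (by simp [Set.mem_Icc, hx1])]
        have : (Prod.mk x ⁻¹' {q : ℝ × ℝ × ℝ | 0 ≤ q.1 ∧ 0 ≤ q.2.1 ∧ 0 ≤ q.2.2 ∧ q.1 + q.2.1 + q.2.2 ≤ 1}) = (∅ : Set (ℝ × ℝ)) := by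
          ext q; simp only [Set.mem_preimage, Set.mem_setOf_eq, Set.mem_empty_iff_false,
            iff_false, not_and]
          intro _ h1 h2; intro h3; push_neg at hx1; linarith
        rw [this]; simp
    · rw [Set.indicator_of_notMem (by simp [Set.mem_Icc, hx])]
      have : (Prod.mk x ⁻¹' {q : ℝ × ℝ × ℝ | 0 ≤ q.1 ∧ 0 ≤ q.2.1 ∧ 0 ≤ q.2.2 ∧ q.1 + q.2.1 + q.2.2 ≤ 1}) = (∅ : Set (ℝ × ℝ)) := by
        ext q; simp only [Set.mem_preimage, Set.mem_setOf_eq, Set.mem_empty_iff_false,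
          iff_false, not_and]
        intro h; exact absurd h hx
      rw [this]; simp
  simp only [hslice]
  show (∫⁻ x, (Set.Icc 0 1).indicator (fun x => ENNReal.ofReal ((1 - x) ^ 2 / 2)) x) = _
  rw [lintegral_indicator measurableSet_Icc]
  rw [← ofReal_integral_eq_lintegral_ofReal]
  · congr 1
    rw [MeasureTheory.integral_Icc_eq_integral_Ioc,
      ← intervalIntegral.integral_of_le (by norm_num : (0:ℝ) ≤ 1)]
    have : ∀ x : ℝ, (1 - x) ^ 2 / 2 = 1/2 - x + x ^ 2 / 2 := by intro x; ring
    simp only [this]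
    rw [intervalIntegral.integral_add (μ := volume), intervalIntegral.integral_sub (μ := volume)]
    · simp only [intervalIntegral.integral_div, integral_pow, intervalIntegral.integral_const, integral_id]
      norm_num
    · exact intervalIntegrable_const
    · exact intervalIntegral.intervalIntegrable_id
    · exact intervalIntegrable_const.sub intervalIntegral.intervalIntegrable_id
    · exact (intervalIntegral.intervalIntegrable_pow 2).div_const 2
  · exact ((continuous_const.sub continuous_id).pow 2).div_const 2 |>.integrableOn_Icc
  · filter_upwards with x
    simp only [Pi.zero_apply]
    positivity

lemma hmeas3 : MeasurableSet {q : ℝ × ℝ × ℝ | 0 ≤ q.1 ∧ 0 ≤ q.2.1 ∧ 0 ≤ q.2.2 ∧ q.1 + q.2.1 + q.2.2 ≤ 1} := by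
  apply MeasurableSet.inter
  · exact measurableSet_le measurable_const measurable_fst
  apply MeasurableSet.inter
  · exact measurableSet_le measurable_const (measurable_fst.comp measurable_snd)
  apply MeasurableSet.inter
  · exact measurableSet_le measurable_const (measurable_snd.comp measurable_snd)
  · exact measurableSet_le
      ((measurable_fst.add (measurable_fst.comp measurable_snd)).add
        (measurable_snd.comp measurable_snd)) measurable_const

lemma volS : volume {x : Fin 3 → ℝ | (∀ i, 0 ≤ x i) ∧ ∑ i, x i ≤ 1} = ENNReal.ofReal (1 / 6) := by
  have h1 := volume_preserving_piFinSuccAbove (fun _ : Fin 3 => ℝ) 0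
  have h2 := (MeasurePreserving.id (volume : Measure ℝ)).prod (volume_preserving_finTwoArrow ℝ)
  have h := h2.comp h1
  have hpre : {x : Fin 3 → ℝ | (∀ i, 0 ≤ x i) ∧ ∑ i, x i ≤ 1}
      = (Prod.map id ((MeasurableEquiv.finTwoArrow : (Fin 2 → ℝ) ≃ᵐ ℝ × ℝ)) ∘ (MeasurableEquiv.piFinSuccAbove (fun _ : Fin 3 => ℝ) 0))
        ⁻¹' {q : ℝ × ℝ × ℝ | 0 ≤ q.1 ∧ 0 ≤ q.2.1 ∧ 0 ≤ q.2.2 ∧ q.1 + q.2.1 + q.2.2 ≤ 1} := by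
    ext x
    simp only [Set.mem_preimage, Set.mem_setOf_eq, Function.comp_apply,
      MeasurableEquiv.piFinSuccAbove_apply, Prod.map_apply, id_eq,
      MeasurableEquiv.finTwoArrow_apply, Fin.removeNth, Fin.succAbove, Fin.sum_univ_three]
    constructor
    · rintro ⟨h0, hsum⟩
      refine ⟨h0 0, h0 1, h0 2, by convert hsum using 2 <;> rfl⟩
    · rintro ⟨ha, hb, hc, hsum⟩
      constructor
      · intro i
        fin_cases i
        · exact ha
        · convert hb using 1; rfl
        · convert hc using 1; rfl
      · convert hsum using 2 <;> rfl
  rw [hpre, h.measure_preimage hmeas3.nullMeasurableSet,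
    ← Measure.volume_eq_prod, vol3]

noncomputable def wtet : Fin 4 → EuclideanSpace ℝ (Fin 3) :=
  fun j => Fin.cases 0 (fun i => EuclideanSpace.single i 1) j

lemma simplex_hull :
    convexHull ℝ (Set.range wtet)
      = {x : EuclideanSpace ℝ (Fin 3) | (∀ i, 0 ≤ x i) ∧ ∑ i, x i ≤ 1} := by
  apply le_antisymm
  · apply convexHull_min
    · rintro _ ⟨j, rfl⟩
      refine Fin.cases ?_ (fun i => ?_) j
      · constructor
        · intro i; simp [wtet]
        · simp [wtet]
      · constructor
        · intro k; simp [wtet, EuclideanSpace.single_apply]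
          split <;> norm_num
        · simp [wtet, EuclideanSpace.single_apply]
    · rintro x ⟨hx0, hx1⟩ y ⟨hy0, hy1⟩ a b ha hb hab
      constructor
      · intro i
        have : (a • x + b • y) i = a * x i + b * y i := by
          simp [PiLp.add_apply, PiLp.smul_apply, smul_eq_mul]
        rw [this]
        have := hx0 i; have := hy0 i; positivity
      · have : ∑ i, (a • x + b • y) i = a * ∑ i, x i + b * ∑ i, y i := by
          simp [PiLp.add_apply, PiLp.smul_apply, smul_eq_mul, Finset.sum_add_distrib,
            Finset.mul_sum]
        rw [this]
        nlinarith [Finset.sum_nonneg (fun i (_ : i ∈ Finset.univ) => hx0 i),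
          Finset.sum_nonneg (fun i (_ : i ∈ Finset.univ) => hy0 i)]
  · rintro x ⟨hx0, hx1⟩
    set μ : Fin 4 → ℝ := fun j => Fin.cases (1 - ∑ i, x i) (fun i => x i) j with hμ
    have hμ0 : ∀ j, 0 ≤ μ j := by
      intro j
      refine Fin.cases ?_ (fun i => ?_) j
      · simpa [hμ] using by linarith
      · simpa [hμ] using hx0 i
    have hμsum : ∑ j, μ j = 1 := by
      rw [Fin.sum_univ_succ]
      simp [hμ]
    have hsum : ∑ j, μ j • wtet j = x := by
      rw [Fin.sum_univ_succ]
      simp only [hμ, wtet, Fin.cases_zero, Fin.cases_succ, smul_zero, zero_add]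
      ext k
      have : (∑ i : Fin 3, x i • (EuclideanSpace.single i 1 : EuclideanSpace ℝ (Fin 3))) k
          = ∑ i : Fin 3, x i * (if k = i then 1 else 0) := by
        rw [show ((∑ i : Fin 3, x i • (EuclideanSpace.single i 1 : EuclideanSpace ℝ (Fin 3))) k)
            = ∑ i : Fin 3, (x i • (EuclideanSpace.single i 1 : EuclideanSpace ℝ (Fin 3))) k by
          rw [WithLp.ofLp_sum]; exact Finset.sum_apply k Finset.univ _]
        refine Finset.sum_congr rfl (fun i _ => ?_)
        simp [EuclideanSpace.single_apply, PiLp.smul_apply, smul_eq_mul]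
      rw [this]
      simp
    have := Finset.centerMass_mem_convexHull (Finset.univ : Finset (Fin 4))
      (fun j _ => hμ0 j) (by rw [hμsum]; norm_num)
      (fun j _ => Set.mem_range_self (f := wtet) j)
    rwa [Finset.centerMass, hμsum, inv_one, one_smul, hsum] at this

lemma volSmeas : MeasurableSet {x : Fin 3 → ℝ | (∀ i, 0 ≤ x i) ∧ ∑ i, x i ≤ 1} := by
  have : {x : Fin 3 → ℝ | (∀ i, 0 ≤ x i) ∧ ∑ i, x i ≤ 1}
      = (⋂ i, {x : Fin 3 → ℝ | 0 ≤ x i}) ∩ {x : Fin 3 → ℝ | ∑ i, x i ≤ 1} := by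
    ext x; simp [Set.mem_iInter]
  rw [this]
  exact (MeasurableSet.iInter fun i =>
      measurableSet_le measurable_const (measurable_pi_apply i)).inter
    (measurableSet_le (Finset.univ.measurable_sum fun i _ => measurable_pi_apply i)
      measurable_const)

lemma volSE : volume {x : EuclideanSpace ℝ (Fin 3) | (∀ i, 0 ≤ x i) ∧ ∑ i, x i ≤ 1}
    = ENNReal.ofReal (1 / 6) := by
  have he := EuclideanSpace.volume_preserving_symm_measurableEquiv_toLp (Fin 3)
  have hpre : {x : EuclideanSpace ℝ (Fin 3) | (∀ i, 0 ≤ x i) ∧ ∑ i, x i ≤ 1}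
      = (MeasurableEquiv.toLp 2 (Fin 3 → ℝ)).symm ⁻¹'
        {x : Fin 3 → ℝ | (∀ i, 0 ≤ x i) ∧ ∑ i, x i ≤ 1} := rfl
  rw [hpre, he.measure_preimage volSmeas.nullMeasurableSet, volS]

theorem volume_regular_tetrahedron
    (s : ℝ) (hs : 0 < s) (p : Fin 4 → EuclideanSpace ℝ (Fin 3))
    (hdist : ∀ i j, i ≠ j → dist (p i) (p j) = s) :
    volume (convexHull ℝ (Set.range p)) = ENNReal.ofReal (Real.sqrt 2 * s ^ 3 / 12) := by
  set c := p 0 with hc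
  set v : Fin 3 → EuclideanSpace ℝ (Fin 3) := fun i => p i.succ - c with hv
  set M : Matrix (Fin 3) (Fin 3) ℝ := Matrix.of fun k j => v j k with hM
  set b := (EuclideanSpace.basisFun (Fin 3) ℝ).toBasis with hb
  set f := Matrix.toLin b b M with hf
  have hfb : ∀ j, f (b j) = v j := by
    intro j
    rw [hf, Matrix.toLin_self]
    ext k
    rw [show ((∑ i, M i j • b i) : EuclideanSpace ℝ (Fin 3)) k
        = ∑ i, (M i j • b i : EuclideanSpace ℝ (Fin 3)) k by
      rw [WithLp.ofLp_sum]; exact Finset.sum_apply k Finset.univ _]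
    simp [hb, EuclideanSpace.basisFun_apply, EuclideanSpace.single_apply, PiLp.smul_apply,
      smul_eq_mul, hM]
  -- the convex hull as a translate of a linear image
  have hp : p = fun j => c +ᵥ f (wtet j) := by
    funext j
    refine Fin.cases ?_ (fun i => ?_) j
    · simp [wtet, hc]
    · have hw : wtet i.succ = b i := by
        simp [wtet, hb, EuclideanSpace.basisFun_apply]
      rw [hw, hfb i, hv]
      simp
  have hhull : convexHull ℝ (Set.range p)
      = c +ᵥ (f '' {x : EuclideanSpace ℝ (Fin 3) | (∀ i, 0 ≤ x i) ∧ ∑ i, x i ≤ 1}) := by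
    rw [← simplex_hull, f.image_convexHull, ← convexHull_vadd]
    congr 1
    rw [hp]
    rw [show (fun j => c +ᵥ f (wtet j)) = (fun x => c +ᵥ x) ∘ (⇑f) ∘ wtet from rfl,
      Set.range_comp, Set.range_comp, Set.image_vadd]
  -- inner products from distances
  have hvnorm : ∀ i, ‖v i‖ = s := by
    intro i
    rw [hv]
    simp only [← dist_eq_norm]
    exact hdist i.succ 0 (Fin.succ_ne_zero i)
  have hinner_diag : ∀ i, (inner ℝ (v i) (v i) : ℝ) = s ^ 2 := by
    intro i
    rw [real_inner_self_eq_norm_sq, hvnorm i]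
  have hinner_off : ∀ i j, i ≠ j → (inner ℝ (v i) (v j) : ℝ) = s ^ 2 / 2 := by
    intro i j hij
    have hsub : ‖v i - v j‖ = s := by
      have : v i - v j = p i.succ - p j.succ := by rw [hv]; simp only [sub_sub_sub_cancel_right]
      rw [this, ← dist_eq_norm]
      exact hdist i.succ j.succ (fun h => hij (Fin.succ_injective _ h))
    have hid := norm_sub_sq_real (v i) (v j)
    rw [hsub, hvnorm i, hvnorm j] at hid
    nlinarith [hid]
  have hgram : ∀ i j, (Mᵀ * M) i j = (inner ℝ (v i) (v j) : ℝ) := by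
    intro i j
    simp only [Matrix.mul_apply, Matrix.transpose_apply, hM, Matrix.of_apply]
    rw [PiLp.inner_apply]
    simp [RCLike.inner_apply, conj_trivial, mul_comm]
  have hdet_sq : M.det ^ 2 = s ^ 6 / 2 := by
    have h1 : M.det ^ 2 = (Mᵀ * M).det := by
      rw [Matrix.det_mul, Matrix.det_transpose]; ring
    rw [h1, Matrix.det_fin_three]
    rw [hgram 0 0, hgram 0 1, hgram 0 2, hgram 1 0, hgram 1 1, hgram 1 2,
      hgram 2 0, hgram 2 1, hgram 2 2,
      hinner_diag 0, hinner_diag 1, hinner_diag 2,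
      hinner_off 0 1 (by decide), hinner_off 0 2 (by decide),
      hinner_off 1 0 (by decide), hinner_off 1 2 (by decide),
      hinner_off 2 0 (by decide), hinner_off 2 1 (by decide)]
    ring
  have habs : |M.det| = Real.sqrt 2 * s ^ 3 / 2 := by
    have h2 : M.det ^ 2 = (Real.sqrt 2 * s ^ 3 / 2) ^ 2 := by
      rw [hdet_sq]
      have : (Real.sqrt 2) ^ 2 = 2 := Real.sq_sqrt (by norm_num)
      nlinarith [this]
    have h3 : (0:ℝ) ≤ Real.sqrt 2 * s ^ 3 / 2 := by positivity
    calc |M.det| = Real.sqrt (M.det ^ 2) := (Real.sqrt_sq_eq_abs _).symm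
      _ = Real.sqrt ((Real.sqrt 2 * s ^ 3 / 2) ^ 2) := by rw [h2]
      _ = Real.sqrt 2 * s ^ 3 / 2 := Real.sqrt_sq h3
  -- final computation
  rw [hhull, measure_vadd, Measure.addHaar_image_linearMap, volSE]
  rw [show LinearMap.det f = M.det from LinearMap.det_toLin b M, habs]
  rw [← ENNReal.ofReal_mul (by positivity)]
  congr 1
  ring
end

section
/- Let s₀ = 1 + 2√3/3 + √6/2 (≈ 3.37945). There exist four points p₀, p₁, p₂, p₃ in ℝ³ whose pairwise distances all equal s₀ and whose convex hull contains the closed unit cube [0,1]³; consequently there is a regular tetrahedron of edge s₀ (of volume √2·s₀³/12 ≈ 4.5485) containing a unit cube. -/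
/-- The closed unit cube `[0,1]³` in `ℝ³`. -/
def unitCube : Set (EuclideanSpace ℝ (Fin 3)) :=
  {p | ∀ i, p i ∈ Set.Icc (0 : ℝ) 1}

set_option maxHeartbeats 2000000 in
theorem exists_regular_tetrahedron_containing_unit_cube :
    ∃ p : Fin 4 → EuclideanSpace ℝ (Fin 3),
      (∀ i j, i ≠ j →
        dist (p i) (p j) = 1 + 2 * Real.sqrt 3 / 3 + Real.sqrt 6 / 2) ∧
      unitCube ⊆ convexHull ℝ (Set.range p) := by
  have ha2 : Real.sqrt 3 ^ 2 = 3 := Real.sq_sqrt (by norm_num)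
  have hb2 : Real.sqrt 6 ^ 2 = 6 := Real.sq_sqrt (by norm_num)
  have ha0 : 0 ≤ Real.sqrt 3 := Real.sqrt_nonneg _
  have hb0 : 0 ≤ Real.sqrt 6 := Real.sqrt_nonneg _
  obtain ⟨s, hs_def⟩ : ∃ s' : ℝ, s' = 1 + 2 * Real.sqrt 3 / 3 + Real.sqrt 6 / 2 := ⟨_, rfl⟩
  obtain ⟨c, hc_def⟩ : ∃ c' : ℝ, c' = Real.sqrt 3 / 6 + 1 / 3 := ⟨_, rfl⟩
  have hs0 : 0 < s := by rw [hs_def]; nlinarith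
  have hsne : s ≠ 0 := ne_of_gt hs0
  have hkey : ∀ u v : EuclideanSpace ℝ (Fin 3),
      dist u v = Real.sqrt ((u 0 - v 0)^2 + (u 1 - v 1)^2 + (u 2 - v 2)^2) := by
    intro u v
    rw [EuclideanSpace.dist_eq, Fin.sum_univ_three]
    simp [Real.dist_eq, sq_abs]
  have hsqrt : ∀ t : ℝ, t = s ^ 2 → Real.sqrt t = s := by
    rintro t rfl; exact Real.sqrt_sq hs0.le
  set p : Fin 4 → EuclideanSpace ℝ (Fin 3) :=
    ![(!₂[1/2 - s/2, c - s*(Real.sqrt 3)/6, 0] : EuclideanSpace ℝ (Fin 3)),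
      !₂[1/2 + s/2, c - s*(Real.sqrt 3)/6, 0],
      !₂[1/2, c + s*(Real.sqrt 3)/3, 0],
      !₂[1/2, c, s*(Real.sqrt 6)/3]] with hp_def
  rw [← hs_def]
  refine ⟨p, ?_, ?_⟩
  · intro i j hij
    fin_cases i <;> fin_cases j
    all_goals first | exact absurd rfl hij | skip
    all_goals
      rw [hkey]; norm_num [hp_def, Matrix.cons_val_zero, Matrix.cons_val_one,
            Matrix.head_cons, Matrix.cons_val_two, Matrix.tail_cons]
    all_goals refine hsqrt _ ?_
    all_goals first
      | ring1
      | linear_combination (s^2/4) * ha2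
      | linear_combination (s^2/36) * ha2 + (s^2/9) * hb2
      | linear_combination (s^2/9) * ha2 + (s^2/9) * hb2
  · intro x hx
    have hx' : ∀ i, x i ∈ Set.Icc (0 : ℝ) 1 := hx
    have h0l := (hx' 0).1
    have h0u := (hx' 0).2
    have h1l := (hx' 1).1
    have h1u := (hx' 1).2
    have h2l := (hx' 2).1
    have h2u := (hx' 2).2
    set w : Fin 4 → ℝ :=
      ![(2*(1 - x 0) + (2*(Real.sqrt 3)/3)*(1 - x 1) + ((Real.sqrt 6)/3)*(1 - x 2))/(2*s),
        (2*(x 0) + (2*(Real.sqrt 3)/3)*(1 - x 1) + ((Real.sqrt 6)/3)*(1 - x 2))/(2*s),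
        (4*(Real.sqrt 3)*(x 1) + (Real.sqrt 6)*(1 - x 2))/(6*s),
        ((Real.sqrt 6) * x 2)/(2*s)] with hw_def
    have hw0 : ∀ i ∈ Finset.univ, 0 ≤ w i := by
      intro i _
      fin_cases i <;>
        (norm_num [hw_def, Matrix.cons_val_zero, Matrix.cons_val_one,
          Matrix.head_cons, Matrix.cons_val_two, Matrix.tail_cons]) <;>
        apply div_nonneg <;>
        nlinarith [hs0, mul_nonneg ha0 (by linarith : (0:ℝ) ≤ 1 - x 1),
          mul_nonneg hb0 (by linarith : (0:ℝ) ≤ 1 - x 2),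
          mul_nonneg ha0 h1l, mul_nonneg hb0 h2l]
    have hsum : ∑ i, w i = 1 := by
      rw [hw_def, Fin.sum_univ_four]
      norm_num [Matrix.cons_val_three, Matrix.cons_val_zero, Matrix.cons_val_one,
        Matrix.head_cons, Matrix.cons_val_two, Matrix.tail_cons]
      field_simp
      linear_combination (-36:ℝ) * hs_def
    have hmem := Finset.centerMass_mem_convexHull (Finset.univ) hw0
      (hsum ▸ one_pos) (fun i _ => Set.mem_range_self (f := p) i)
    rw [Finset.centerMass_eq_of_sum_1 _ _ hsum] at hmem
    have hx_eq : x = ∑ i : Fin 4, w i • p i := by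
      ext j
      have hrhs : (∑ i : Fin 4, w i • p i) j = ∑ i : Fin 4, w i * p i j := by
        rw [Fin.sum_univ_four, Fin.sum_univ_four]
        simp only [PiLp.add_apply, PiLp.smul_apply, smul_eq_mul]
      rw [hrhs, hp_def, hw_def]
      have hfin2 : ∀ h : (2:ℕ) < 3, (⟨2, h⟩ : Fin 3) = (2 : Fin 3) := fun _ => rfl
      fin_cases j <;>
        norm_num [Fin.sum_univ_four, hfin2, Matrix.cons_val_three, Matrix.cons_val_zero, Matrix.cons_val_one,
          Matrix.head_cons, Matrix.cons_val_two, Matrix.tail_cons] <;>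
        field_simp <;>
        first
          | linear_combination (36:ℝ) * hs_def
          | linear_combination ((4:ℝ)*s - (12:ℝ)*s*(x 1)) * ha2 + ((6:ℝ)*(Real.sqrt 3) + 12) * hs_def - ((36:ℝ) + (24:ℝ)*(Real.sqrt 3) + (18:ℝ)*(Real.sqrt 6)) * hc_def
          | linear_combination (-(x 2)) * hb2
          | (rw [show ((⟨2, by norm_num⟩ : Fin 3)) = (2 : Fin 3) from rfl];
             linear_combination ((-1:ℝ)*s*(x 2)) * hb2)
    rw [hx_eq]
    exact hmem
end

section
/- If p₀, p₁, p₂, p₃ are four points in ℝ³ whose pairwise distances all equal t and whose convex hull contains the unit regular octahedron O, then t ≥ 2; i.e. the smallest regular tetrahedron containing a regular octahedron of edge 1 has edge length 2. -/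
/-- A point of `ℝ³` (as `EuclideanSpace ℝ (Fin 3)`) from its coordinates. -/
noncomputable def pt (x y z : ℝ) : EuclideanSpace ℝ (Fin 3) := WithLp.toLp 2 ![x, y, z]

/-- The vertex set of the unit regular octahedron. -/
noncomputable def octaVerts : Set (EuclideanSpace ℝ (Fin 3)) :=
  {pt (Real.sqrt 2 / 2) 0 0, pt (-(Real.sqrt 2 / 2)) 0 0,
   pt 0 (Real.sqrt 2 / 2) 0, pt 0 (-(Real.sqrt 2 / 2)) 0,
   pt 0 0 (Real.sqrt 2 / 2), pt 0 0 (-(Real.sqrt 2 / 2))}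

lemma cons_val_five {α : Type*} (a b c d e f : α) : ![a,b,c,d,e,f] 5 = f := rfl

lemma mem_octa_of_l1 (x : EuclideanSpace ℝ (Fin 3))
    (h : |x 0| + |x 1| + |x 2| ≤ Real.sqrt 2 / 2) :
    x ∈ convexHull ℝ octaVerts := by
  obtain ⟨a, ha⟩ : ∃ a : ℝ, a = Real.sqrt 2 / 2 := ⟨_, rfl⟩
  have ha0 : 0 < a := by
    rw [ha]
    have : (0:ℝ) < Real.sqrt 2 := Real.sqrt_pos.mpr (by norm_num)
    linarith
  rw [← ha] at h
  obtain ⟨s, hs⟩ : ∃ s : ℝ, s = 1 - (|x 0| + |x 1| + |x 2|) / a := ⟨_, rfl⟩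
  have hs0 : 0 ≤ s := by
    have : (|x 0| + |x 1| + |x 2|) / a ≤ 1 := by
      rw [div_le_one ha0]; exact h
    rw [hs]; linarith
  obtain ⟨w, hw⟩ : ∃ w : Fin 6 → ℝ, w = ![(|x 0| + x 0)/(2*a) + s/6, (|x 0| - x 0)/(2*a) + s/6,
      (|x 1| + x 1)/(2*a) + s/6, (|x 1| - x 1)/(2*a) + s/6,
      (|x 2| + x 2)/(2*a) + s/6, (|x 2| - x 2)/(2*a) + s/6] := ⟨_, rfl⟩
  obtain ⟨z, hz⟩ : ∃ z : Fin 6 → EuclideanSpace ℝ (Fin 3),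
      z = ![pt a 0 0, pt (-a) 0 0, pt 0 a 0, pt 0 (-a) 0, pt 0 0 a, pt 0 0 (-a)] := ⟨_, rfl⟩
  have ha' : a ≠ 0 := ne_of_gt ha0
  have hkey : ∀ k : Fin 3, (∑ i, w i • z i) k = ∑ i, w i * z i k := by
    intro k
    rw [Fin.sum_univ_six, Fin.sum_univ_six]
    simp [PiLp.add_apply, PiLp.smul_apply, smul_eq_mul]
  have hcoord : ∀ k : Fin 3, k = 0 ∨ k = 1 ∨ k = 2 → x k = ∑ i, w i * z i k := by
    rintro k (rfl | rfl | rfl) <;>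
      · rw [Fin.sum_univ_six, hw, hz]
        simp only [pt, WithLp.ofLp_toLp, Matrix.cons_val_zero, Matrix.cons_val_one, Matrix.head_cons,
          Matrix.cons_val_two, Matrix.tail_cons, Matrix.cons_val_three,
          Matrix.cons_val_four, cons_val_five]
        field_simp
        ring
  have hx : x = ∑ i, w i • z i := by
    ext j
    fin_cases j
    · exact (hcoord 0 (by norm_num)).trans (hkey 0).symm
    · exact (hcoord 1 (by norm_num)).trans (hkey 1).symm
    · exact (hcoord 2 (by norm_num)).trans (hkey 2).symm
  rw [hx]
  apply (convex_convexHull ℝ octaVerts).sum_mem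
  · intro i _
    have h0 := le_abs_self (x 0); have h0' := neg_abs_le (x 0)
    have h1 := le_abs_self (x 1); have h1' := neg_abs_le (x 1)
    have h2 := le_abs_self (x 2); have h2' := neg_abs_le (x 2)
    have h2a : (0:ℝ) < 2*a := by linarith
    fin_cases i <;>
      · rw [hw]
        simp only [Matrix.cons_val_zero, Matrix.cons_val_one, Matrix.head_cons,
          Matrix.cons_val_two, Matrix.tail_cons, Matrix.cons_val_three,
          Matrix.cons_val_four, cons_val_five]
        have : (0:ℝ) ≤ s/6 := by linarith
        apply add_nonneg _ this
        apply div_nonneg (by linarith) (by linarith)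
  · rw [Fin.sum_univ_six, hw]
    simp only [Matrix.cons_val_zero, Matrix.cons_val_one, Matrix.head_cons,
      Matrix.cons_val_two, Matrix.tail_cons, Matrix.cons_val_three,
      Matrix.cons_val_four, cons_val_five]
    rw [hs]
    field_simp
    ring
  · intro i _
    apply subset_convexHull
    rw [hz]
    fin_cases i <;>
      simp [octaVerts, ha, Matrix.cons_val_zero, Matrix.cons_val_one, Matrix.head_cons,
        Matrix.cons_val_two, Matrix.tail_cons, Matrix.cons_val_three,
        Matrix.cons_val_four, cons_val_five]

set_option maxHeartbeats 2000000

theorem min_edge_regular_tetrahedron_containing_unit_octahedron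
    (t : ℝ) (p : Fin 4 → EuclideanSpace ℝ (Fin 3))
    (hdist : ∀ i j, i ≠ j → dist (p i) (p j) = t)
    (hocta : convexHull ℝ octaVerts ⊆ convexHull ℝ (Set.range p)) :
    t ≥ 2 := by
  have h01 : dist (p 0) (p 1) = t := hdist 0 1 (by decide)
  have ht0 : 0 ≤ t := h01 ▸ dist_nonneg
  rcases ht0.eq_or_lt with h0 | htpos
  · -- degenerate: t = 0 impossible
    exfalso
    have hall : ∀ j, p j = p 0 := by
      intro j
      by_cases hj : j = 0
      · rw [hj]
      · have hd := hdist j 0 hj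
        rw [← h0] at hd
        exact dist_eq_zero.mp hd
    have hr : Set.range p = {p 0} := by
      ext y
      constructor
      · rintro ⟨j, rfl⟩; exact hall j
      · rintro rfl; exact ⟨0, rfl⟩
    have hv1 : pt (Real.sqrt 2 / 2) 0 0 ∈ convexHull ℝ octaVerts :=
      subset_convexHull ℝ _ (by simp [octaVerts])
    have hv2 : pt (-(Real.sqrt 2 / 2)) 0 0 ∈ convexHull ℝ octaVerts :=
      subset_convexHull ℝ _ (by simp [octaVerts])
    have h1 := hocta hv1
    have h2 := hocta hv2
    rw [hr, convexHull_singleton, Set.mem_singleton_iff] at h1 h2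
    have heq : pt (Real.sqrt 2 / 2) 0 0 = pt (-(Real.sqrt 2 / 2)) 0 0 := h1.trans h2.symm
    have hcc := congrArg (fun v => v 0) heq
    simp [pt] at hcc
    have : (0:ℝ) < Real.sqrt 2 := Real.sqrt_pos.mpr (by norm_num)
    linarith
  -- main case: t > 0
  have ht' : t ≠ 0 := ne_of_gt htpos
  obtain ⟨c, hc⟩ : ∃ c : EuclideanSpace ℝ (Fin 3), c = (4:ℝ)⁻¹ • (p 0 + p 1 + p 2 + p 3) :=
    ⟨_, rfl⟩
  have hd : ∀ i j : Fin 4, i ≠ j →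
      (inner ℝ (p i) (p i) : ℝ) - 2 * (inner ℝ (p i) (p j) : ℝ) + (inner ℝ (p j) (p j) : ℝ) = t^2 := by
    intro i j hij
    have h1 : dist (p i) (p j) ^ 2 = t ^ 2 := by rw [hdist i j hij]
    rw [dist_eq_norm, ← real_inner_self_eq_norm_sq, real_inner_sub_sub_self] at h1
    linarith
  have hsym : ∀ i j : Fin 4, (inner ℝ (p i) (p j) : ℝ) = (inner ℝ (p j) (p i) : ℝ) :=
    fun i j => real_inner_comm _ _
  have hfin : ∀ k : Fin 4, k = 0 ∨ k = 1 ∨ k = 2 ∨ k = 3 := by decide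
  -- the half-space bound
  have key : ∀ i : Fin 4, ∀ q ∈ convexHull ℝ (Set.range p),
      (inner ℝ (c - q) (p i - c) : ℝ) ≤ t^2/8 := by
    intro i q hq
    have hconv : Convex ℝ {x : EuclideanSpace ℝ (Fin 3) |
        (inner ℝ c (p i - c) : ℝ) - t^2/8 ≤ (inner ℝ x (p i - c) : ℝ)} := by
      apply convex_halfSpace_ge
      exact ⟨fun a b => inner_add_left _ _ _, fun r a => real_inner_smul_left _ _ _⟩
    have hsub : convexHull ℝ (Set.range p) ⊆ {x : EuclideanSpace ℝ (Fin 3) |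
        (inner ℝ c (p i - c) : ℝ) - t^2/8 ≤ (inner ℝ x (p i - c) : ℝ)} := by
      apply convexHull_min _ hconv
      rintro _ ⟨j, rfl⟩
      show (inner ℝ c (p i - c) : ℝ) - t^2/8 ≤ (inner ℝ (p j) (p i - c) : ℝ)
      have e2 : (inner ℝ (c - p j) (p i - c) : ℝ) ≤ t^2/8 := by
        rw [hc]
        simp only [inner_sub_left, inner_sub_right, inner_add_left, inner_add_right,
          real_inner_smul_left, real_inner_smul_right]
        have ht2 : 0 ≤ t^2 := sq_nonneg t
        rcases hfin i with rfl | rfl | rfl | rfl <;> rcases hfin j with rfl | rfl | rfl | rfl <;>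
          · linarith [hd 0 1 (by decide), hd 0 2 (by decide), hd 0 3 (by decide),
              hd 1 2 (by decide), hd 1 3 (by decide), hd 2 3 (by decide),
              hsym 0 1, hsym 0 2, hsym 0 3, hsym 1 2, hsym 1 3, hsym 2 3]
      rw [inner_sub_left] at e2
      linarith
    have hmem := hsub hq
    simp only [Set.mem_setOf_eq] at hmem
    rw [inner_sub_left]
    linarith
  -- squared norm of p i - c
  have hvv : ∀ i : Fin 4, (inner ℝ (p i - c) (p i - c) : ℝ) = 3 * t^2 / 8 := by
    intro i
    rw [hc]
    simp only [inner_sub_left, inner_sub_right, inner_add_left, inner_add_right,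
      real_inner_smul_left, real_inner_smul_right]
    rcases hfin i with rfl | rfl | rfl | rfl <;>
      · linarith [hd 0 1 (by decide), hd 0 2 (by decide), hd 0 3 (by decide),
          hd 1 2 (by decide), hd 1 3 (by decide), hd 2 3 (by decide),
          hsym 0 1, hsym 0 2, hsym 0 3, hsym 1 2, hsym 1 3, hsym 2 3]
  -- the probe points lie in the octahedron
  have hq : ∀ i : Fin 4, (-(2/(3*t)) • (p i - c)) ∈ convexHull ℝ octaVerts := by
    intro i
    obtain ⟨y, hy⟩ : ∃ y : EuclideanSpace ℝ (Fin 3), y = -(2/(3*t)) • (p i - c) := ⟨_, rfl⟩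
    rw [← hy]
    apply mem_octa_of_l1
    have hyy : (y 0)^2 + (y 1)^2 + (y 2)^2 = 1/6 := by
      have h1 : (inner ℝ y y : ℝ) = (2/(3*t)) * ((2/(3*t)) * (inner ℝ (p i - c) (p i - c) : ℝ)) := by
        rw [hy, real_inner_smul_left, real_inner_smul_right]
        ring_nf
      rw [hvv i] at h1
      have h2 : (inner ℝ y y : ℝ) = (y 0)^2 + (y 1)^2 + (y 2)^2 := by
        rw [PiLp.inner_apply]
        simp only [RCLike.inner_apply, conj_trivial]
        rw [Fin.sum_univ_three]
        ring
      rw [h2] at h1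
      rw [h1]
      field_simp
      ring
    have h3 : (|y 0| + |y 1| + |y 2|)^2 ≤ 3 * ((y 0)^2 + (y 1)^2 + (y 2)^2) := by
      nlinarith [sq_nonneg (|y 0| - |y 1|), sq_nonneg (|y 0| - |y 2|), sq_nonneg (|y 1| - |y 2|),
        sq_abs (y 0), sq_abs (y 1), sq_abs (y 2)]
    have h5 : (0:ℝ) ≤ Real.sqrt 2 / 2 := by positivity
    have h6 : (Real.sqrt 2 / 2)^2 = 1/2 := by
      rw [div_pow, Real.sq_sqrt (by norm_num : (2:ℝ) ≥ 0)]
      norm_num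
    have h4 : (|y 0| + |y 1| + |y 2|)^2 ≤ (Real.sqrt 2 / 2)^2 := by
      rw [h6, hyy] at *
      linarith
    have h7 : 0 ≤ |y 0| + |y 1| + |y 2| := by positivity
    nlinarith [h4, h5, h7]
  -- combine
  have hkey : ∀ i : Fin 4, (inner ℝ c (p i - c) : ℝ) + t/4 ≤ t^2/8 := by
    intro i
    have hmem := hocta (hq i)
    have h1 := key i _ hmem
    rw [inner_sub_left, real_inner_smul_left, hvv i] at h1
    have : -(2 / (3 * t)) * (3 * t ^ 2 / 8) = -(t/4) := by
      field_simp
      ring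
    rw [this] at h1
    linarith
  have hz4 : (p 0 - c) + (p 1 - c) + (p 2 - c) + (p 3 - c) = 0 := by
    rw [hc]
    module
  have hsum : (inner ℝ c (p 0 - c) : ℝ) + (inner ℝ c (p 1 - c) : ℝ)
      + (inner ℝ c (p 2 - c) : ℝ) + (inner ℝ c (p 3 - c) : ℝ) = 0 := by
    have : (inner ℝ c ((p 0 - c) + (p 1 - c) + (p 2 - c) + (p 3 - c)) : ℝ) = 0 := by
      rw [hz4, inner_zero_right]
    rw [inner_add_right, inner_add_right, inner_add_right] at this
    linarith
  have h0' := hkey 0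
  have h1' := hkey 1
  have h2' := hkey 2
  have h3' := hkey 3
  nlinarith [h0', h1', h2', h3', hsum, htpos, mul_pos htpos htpos]
end

section
/- Let φ = (1+√5)/2 and let c = √(30+6√5)/4. The four points (c,c,c), (c,−c,−c), (−c,c,−c), (−c,−c,c) are pairwise at distance √(15+3√5) (≈ 4.65921), and their convex hull contains the twelve points (0, ±1/2, ±φ/2), (±φ/2, 0, ±1/2), (±1/2, ±φ/2, 0) (the vertices of a regular icosahedron of edge 1); hence a regular tetrahedron whose insphere radius equals the circumradius √(10+2√5)/4 of the unit icosahedron has edge √(15+3√5) and contains the unit icosahedron. -/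
/-- The golden ratio. -/
noncomputable def φ : ℝ := (1 + Real.sqrt 5) / 2

/-- The twelve vertices of a regular icosahedron of edge length 1. -/
noncomputable def icoVerts1 : Set (EuclideanSpace ℝ (Fin 3)) :=
  {pt 0 (1 / 2) (φ / 2), pt 0 (1 / 2) (-(φ / 2)), pt 0 (-(1 / 2)) (φ / 2),
   pt 0 (-(1 / 2)) (-(φ / 2)),
   pt (φ / 2) 0 (1 / 2), pt (φ / 2) 0 (-(1 / 2)), pt (-(φ / 2)) 0 (1 / 2),
   pt (-(φ / 2)) 0 (-(1 / 2)),
   pt (1 / 2) (φ / 2) 0, pt (1 / 2) (-(φ / 2)) 0, pt (-(1 / 2)) (φ / 2) 0,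
   pt (-(1 / 2)) (-(φ / 2)) 0}

/-- For `c`, the tetrahedron vertices `(c,c,c)`, `(c,−c,−c)`, `(−c,c,−c)`, `(−c,−c,c)`. -/
noncomputable def tetVert (c : ℝ) : Fin 4 → EuclideanSpace ℝ (Fin 3) :=
  ![pt c c c, pt c (-c) (-c), pt (-c) c (-c), pt (-c) (-c) c]

lemma mem_hull {c : ℝ} (hc : 0 < c) {x y z : ℝ} (h : |x| + |y| + |z| ≤ c) :
    pt x y z ∈ convexHull ℝ (Set.range (tetVert c)) := by
  have hx1 := abs_le.mp (le_refl |x|) |>.1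
  have hx := neg_abs_le x
  have hx' := le_abs_self x
  have hy := neg_abs_le y
  have hy' := le_abs_self y
  have hz := neg_abs_le z
  have hz' := le_abs_self z
  set w : Fin 4 → ℝ :=
    ![(c + x + y + z) / (4 * c), (c + x - y - z) / (4 * c),
      (c - x + y - z) / (4 * c), (c - x - y + z) / (4 * c)] with hw
  have hwnn : ∀ i ∈ Finset.univ, 0 ≤ w i := by
    intro i _
    fin_cases i <;> simp only [hw, Matrix.cons_val_zero, Matrix.cons_val_one, Matrix.head_cons,
      Matrix.cons_val_two, Matrix.tail_cons, Matrix.cons_val_three] <;>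
      apply div_nonneg _ (by linarith) <;> linarith
  have hws : ∑ i, w i = 1 := by
    simp [hw, Fin.sum_univ_four]
    field_simp
    ring
  have hmem : ∀ i ∈ Finset.univ, tetVert c i ∈ Set.range (tetVert c) := fun i _ => ⟨i, rfl⟩
  have := Finset.centerMass_mem_convexHull Finset.univ hwnn (by rw [hws]; norm_num) hmem
  rwa [Finset.centerMass_eq_of_sum_1 _ _ hws, show (∑ i, w i • tetVert c i) = pt x y z from ?_]
    at this
  ext j
  have hsum : (∑ i, w i • tetVert c i) j = ∑ i, w i * tetVert c i j := by
    rw [WithLp.ofLp_sum, Finset.sum_apply]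
    rfl
  rw [hsum]
  fin_cases j <;>
    simp [hw, Fin.sum_univ_four, tetVert, pt] <;> field_simp <;> ring

theorem circumsphere_tetrahedron_contains_unit_icosahedron :
    (∀ i j, i ≠ j →
      dist (tetVert (Real.sqrt (30 + 6 * Real.sqrt 5) / 4) i)
           (tetVert (Real.sqrt (30 + 6 * Real.sqrt 5) / 4) j)
        = Real.sqrt (15 + 3 * Real.sqrt 5)) ∧
    icoVerts1 ⊆ convexHull ℝ (Set.range (tetVert (Real.sqrt (30 + 6 * Real.sqrt 5) / 4))) := by
  have h5 : (0:ℝ) ≤ Real.sqrt 5 := Real.sqrt_nonneg 5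
  have h5sq : Real.sqrt 5 ^ 2 = 5 := Real.sq_sqrt (by norm_num)
  have hCsq : Real.sqrt (30 + 6 * Real.sqrt 5) ^ 2 = 30 + 6 * Real.sqrt 5 :=
    Real.sq_sqrt (by positivity)
  have hCpos : 0 < Real.sqrt (30 + 6 * Real.sqrt 5) := Real.sqrt_pos.mpr (by positivity)
  set c : ℝ := Real.sqrt (30 + 6 * Real.sqrt 5) / 4 with hc
  have hcpos : 0 < c := by positivity
  constructor
  · intro i j hij
    fin_cases i <;> fin_cases j <;> first
      | exact absurd rfl hij
      | · rw [EuclideanSpace.dist_eq]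
          congr 1
          simp [tetVert, pt, Fin.sum_univ_three, Real.dist_eq, sq_abs]
          nlinarith [hCsq]
  · have hφ : 0 ≤ φ := by unfold φ; positivity
    have hbound : (1:ℝ)/2 + φ/2 ≤ c := by
      have key : (3 + Real.sqrt 5) ≤ Real.sqrt (30 + 6 * Real.sqrt 5) := by
        rw [show (3 + Real.sqrt 5 : ℝ) = Real.sqrt ((3 + Real.sqrt 5)^2) by
          rw [Real.sqrt_sq (by positivity)]]
        apply Real.sqrt_le_sqrt
        nlinarith
      rw [hc]
      unfold φ
      linarith
    intro p hp
    have e1 : |(1:ℝ)/2| = 1/2 := by norm_num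
    have e2 : |φ/2| = φ/2 := abs_of_nonneg (by positivity)
    simp only [icoVerts1, Set.mem_insert_iff, Set.mem_singleton_iff] at hp
    rcases hp with h|h|h|h|h|h|h|h|h|h|h|h <;> subst h <;>
      apply mem_hull hcpos <;>
      simp only [abs_neg, abs_zero, e1, e2] <;> linarith
end
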